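/- arXiv:1210.5727 — 2 statements merged into one kernel-verified Lean document; each statement's English description precedes it below -/
import Mathlib

section
/- Let K be a number field. For every ε > 0 there is a constant C = C(K, ε) such that for all real P ≥ 2 and every integer u, the number of algebraic integers z ∈ O_K satisfying N_{K/ℚ}(z) = u and |σ(z)| ≤ P for every embedding σ : K → ℂ is at most C·P^ε. -/
/-!
STATEMENT 8: Let K be a number field. For every ε > 0 there is a constant C = C(K, ε)
such that for all real P ≥ 2 and every integer u, the number of algebraic integers
z ∈ O_K with N_{K/ℚ}(z) = u and |σ(z)| ≤ P for every embedding σ : K → ℂ is at most C·P^ε.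
-/

open NumberField NumberField.InfinitePlace NumberField.Units
open NumberField.Units.dirichletUnitTheorem UniqueFactorizationMonoid

lemma aux_ncard_le_mul {α β : Type*} (s : Set α) (hs : s.Finite) (f : α → β) (k : ℕ)
    (hk : ∀ b : β, (s ∩ f ⁻¹' {b}).ncard ≤ k) : s.ncard ≤ k * (f '' s).ncard := by
  classical
  have himg : f '' s = ↑(hs.toFinset.image f) := by
    simp [Finset.coe_image, Set.Finite.coe_toFinset]
  rw [Set.ncard_eq_toFinset_card s hs, himg, Set.ncard_coe_finset]
  refine Finset.card_le_mul_card_image _ k (fun a _ => ?_)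
  have hcoe : ((hs.toFinset.filter fun x => f x = a) : Set α) = s ∩ f ⁻¹' {a} := by
    ext x; simp [Set.Finite.mem_toFinset]
  calc (hs.toFinset.filter fun x => f x = a).card
      = (s ∩ f ⁻¹' {a}).ncard := by rw [← hcoe, Set.ncard_coe_finset]
    _ ≤ k := hk a

lemma aux_zlattice_count {E : Type*} [NormedAddCommGroup E] [NormedSpace ℝ E]
    [FiniteDimensional ℝ E] (L : Submodule ℤ E) [DiscreteTopology L] [IsZLattice ℝ L]
    {ι : Type*} [Fintype ι] (b : Module.Basis ι ℤ L) :
    ∃ C : ℝ, 0 < C ∧ ∀ R : ℝ, 0 ≤ R →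
      (((L : Set E) ∩ Metric.closedBall 0 R).ncard : ℝ)
        ≤ (C * (1 + R)) ^ (Fintype.card ι) := by
  classical
  set B := b.ofZLatticeBasis ℝ L with hB
  set g : ι → E →L[ℝ] ℝ := fun i => LinearMap.toContinuousLinearMap (B.coord i) with hg
  set C₀ : ℝ := 1 + ∑ i, ‖g i‖ with hC₀
  have hC₀one : 1 ≤ C₀ := le_add_of_nonneg_right (Finset.sum_nonneg fun i _ => norm_nonneg _)
  have hC₀pos : 0 < C₀ := lt_of_lt_of_le one_pos hC₀one
  refine ⟨3 * C₀, by positivity, fun R hR => ?_⟩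
  set M : ℕ := ⌈C₀ * R⌉₊ with hM
  have hcoord : ∀ (x : L), (x : E) ∈ Metric.closedBall 0 R → ∀ i,
      b.repr x i ∈ Finset.Icc (-(M : ℤ)) (M : ℤ) := by
    intro x hx i
    have h1 : ((b.repr x i : ℤ) : ℝ) = B.repr (x : E) i :=
      (b.ofZLatticeBasis_repr_apply ℝ L x i).symm
    have h2 : |B.repr (x : E) i| ≤ C₀ * R := by
      have hX : B.repr (x : E) i = g i (x : E) := by simp [hg, Module.Basis.coord_apply]
      rw [hX]
      calc |g i (x : E)| = ‖g i (x : E)‖ := rfl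
        _ ≤ ‖g i‖ * ‖(x : E)‖ := (g i).le_opNorm _
        _ ≤ C₀ * R := by
            refine mul_le_mul ?_ ?_ (norm_nonneg _) (le_of_lt hC₀pos)
            · rw [hC₀]
              refine le_add_of_nonneg_of_le zero_le_one ?_
              exact Finset.single_le_sum (fun j _ => norm_nonneg (g j)) (Finset.mem_univ i)
            · simpa [mem_closedBall_iff_norm] using hx
    have h4 : |(b.repr x i : ℤ)| ≤ (M : ℤ) := by
      have h3 : |((b.repr x i : ℤ) : ℝ)| ≤ (M : ℝ) := by
        rw [h1]; exact h2.trans (Nat.le_ceil _)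
      rw [← Int.cast_abs] at h3
      exact_mod_cast h3
    simpa [Finset.mem_Icc] using abs_le.mp h4
  set t : Finset (ι → ℤ) := Fintype.piFinset (fun _ : ι => Finset.Icc (-(M : ℤ)) (M : ℤ)) with ht
  set F : E → (ι → ℤ) := fun x => if h : x ∈ L then (fun i => b.repr ⟨x, h⟩ i) else 0 with hF
  have hFle : ∀ (x : E) (h : x ∈ L), F x = fun i => b.repr ⟨x, h⟩ i := by
    intro x h; simp [hF, dif_pos h]
  have hmaps : ∀ x ∈ (L : Set E) ∩ Metric.closedBall 0 R, F x ∈ (t : Set (ι → ℤ)) := by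
    rintro x ⟨hxL, hxB⟩
    rw [hFle x hxL]
    simp only [ht, Finset.mem_coe, Fintype.mem_piFinset]
    intro i
    exact hcoord ⟨x, hxL⟩ hxB i
  have hinj : Set.InjOn F ((L : Set E) ∩ Metric.closedBall 0 R) := by
    rintro x ⟨hxL, _⟩ y ⟨hyL, _⟩ hxy
    rw [hFle x hxL, hFle y hyL] at hxy
    have hrepr : b.repr ⟨x, hxL⟩ = b.repr ⟨y, hyL⟩ :=
      Finsupp.ext fun i => congrFun hxy i
    have := b.repr.injective hrepr
    exact congrArg Subtype.val this
  have hcard : ((L : Set E) ∩ Metric.closedBall 0 R).ncard ≤ t.card := by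
    have := Set.ncard_le_ncard_of_injOn F hmaps hinj t.finite_toSet
    simpa [Set.ncard_coe_finset] using this
  have htcard : t.card = (2 * M + 1) ^ (Fintype.card ι) := by
    rw [ht, Fintype.card_piFinset]
    simp only [Int.card_Icc]
    rw [Finset.prod_const]
    congr 1
    simp [Finset.card_univ]
    omega
  have hMbound : (2 * M + 1 : ℝ) ≤ 3 * C₀ * (1 + R) := by
    have h1 : (M : ℝ) ≤ C₀ * R + 1 := le_of_lt (Nat.ceil_lt_add_one (by positivity))
    nlinarith [mul_nonneg hC₀pos.le hR]
  calc (((L : Set E) ∩ Metric.closedBall 0 R).ncard : ℝ)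
      ≤ ((2 * M + 1 : ℕ) : ℝ) ^ (Fintype.card ι) := by
        exact_mod_cast le_trans (Nat.cast_le.mpr (hcard.trans_eq htcard)) (le_of_eq (by push_cast; ring))
    _ ≤ (3 * C₀ * (1 + R)) ^ (Fintype.card ι) := by
        apply pow_le_pow_left₀ (by positivity) (by push_cast at hMbound ⊢; linarith)

lemma aux_units_box_finite (K : Type*) [Field K] [NumberField K] (Q : ℝ) :
    {η : (𝓞 K)ˣ | ∀ w : InfinitePlace K,
      Q⁻¹ ≤ w (algebraMap (𝓞 K) K (η : 𝓞 K)) ∧ w (algebraMap (𝓞 K) K (η : 𝓞 K)) ≤ Q}.Finite := by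
  set T := {x : K | IsIntegral ℤ x ∧ ∀ φ : K →+* ℂ, ‖φ x‖ ≤ Q}
  have hT : T.Finite := Embeddings.finite_of_norm_le K ℂ Q
  refine Set.Finite.of_finite_image (f := fun η : (𝓞 K)ˣ => algebraMap (𝓞 K) K (η : 𝓞 K)) ?_ ?_
  · refine hT.subset ?_
    rintro x ⟨η, hη, rfl⟩
    refine ⟨RingOfIntegers.isIntegral_coe _, fun φ => ?_⟩
    have := (hη (InfinitePlace.mk φ)).2
    rwa [InfinitePlace.apply] at this
  · intro η _ η' _ h
    exact Units.ext (RingOfIntegers.coe_injective h)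

lemma aux_units_box_count (K : Type*) [Field K] [NumberField K] :
    ∃ C : ℝ, 0 < C ∧ ∀ Q : ℝ, 1 ≤ Q →
      (({η : (𝓞 K)ˣ | ∀ w : InfinitePlace K,
        Q⁻¹ ≤ w (algebraMap (𝓞 K) K (η : 𝓞 K)) ∧
          w (algebraMap (𝓞 K) K (η : 𝓞 K)) ≤ Q}.ncard : ℝ))
        ≤ C * (1 + Real.log Q) ^ (rank K) := by
  classical
  obtain ⟨C₁, hC₁, hlat⟩ := aux_zlattice_count (unitLattice K) (basisUnitLattice K)
  set tors : ℕ := ((torsion K : Set (𝓞 K)ˣ)).ncard with htors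
  have htorsfin : ((torsion K : Set (𝓞 K)ˣ)).Finite := by
    haveI : Finite ((torsion K : Set (𝓞 K)ˣ) : Type _) := inferInstanceAs (Finite (torsion K))
    exact Set.toFinite _
  have htorspos : 0 < tors := by
    rw [htors, Set.ncard_pos htorsfin]
    exact ⟨1, SetLike.mem_coe.mpr (Subgroup.one_mem _)⟩
  refine ⟨tors * (2 * C₁) ^ (rank K), by positivity, fun Q hQ => ?_⟩
  have hlogQ : 0 ≤ Real.log Q := Real.log_nonneg hQ
  set S := {η : (𝓞 K)ˣ | ∀ w : InfinitePlace K,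
      Q⁻¹ ≤ w (algebraMap (𝓞 K) K (η : 𝓞 K)) ∧ w (algebraMap (𝓞 K) K (η : 𝓞 K)) ≤ Q} with hS
  have hSfin : S.Finite := aux_units_box_finite K Q
  set f : (𝓞 K)ˣ → ({w : InfinitePlace K // w ≠ w₀} → ℝ) :=
    fun η => logEmbedding K (Additive.ofMul η) with hf
  -- the image lies in the lattice intersected with a ball
  have himg : f '' S ⊆ (unitLattice K : Set _) ∩ Metric.closedBall 0 (2 * Real.log Q) := by
    rintro _ ⟨η, hη, rfl⟩
    constructor
    · exact ⟨Additive.ofMul η, trivial, rfl⟩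
    · rw [Metric.mem_closedBall, dist_zero_right]
      refine pi_norm_le_iff_of_nonneg (by positivity) |>.mpr fun w => ?_
      have hcomp : f η w = (mult w.val : ℝ) * Real.log (w.val (algebraMap (𝓞 K) K (η : 𝓞 K))) := rfl
      rw [hcomp]
      have hpos : 0 < w.val (algebraMap (𝓞 K) K (η : 𝓞 K)) := by
        refine InfinitePlace.pos_iff.mpr ?_
        have h0 : ((η : 𝓞 K) : K) ≠ 0 := by exact_mod_cast Units.ne_zero η
        rw [RingOfIntegers.coe_eq_algebraMap] at h0
        exact h0
      have hlog : |Real.log (w.val (algebraMap (𝓞 K) K (η : 𝓞 K)))| ≤ Real.log Q := by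
        rw [abs_le]
        constructor
        · rw [← Real.log_inv]
          exact Real.log_le_log (by positivity) (hη w.val).1
        · exact Real.log_le_log hpos (hη w.val).2
      have hmult : (mult w.val : ℝ) ≤ 2 := by
        rw [mult]; split_ifs <;> norm_num
      rw [Real.norm_eq_abs, abs_mul, Nat.abs_cast]
      exact mul_le_mul hmult hlog (abs_nonneg _) (by norm_num)
  -- fibers have at most `tors` elements
  have hfib : ∀ v, (S ∩ f ⁻¹' {v}).ncard ≤ tors := by
    intro v
    rcases (S ∩ f ⁻¹' {v}).eq_empty_or_nonempty with h | ⟨η₀, hη₀⟩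
    · simp [h]
    · refine Set.ncard_le_ncard_of_injOn (fun η => η₀⁻¹ * η) ?_ ?_ htorsfin
      · rintro η ⟨hηS, hηv⟩
        have h0 : logEmbedding K (Additive.ofMul η₀) = v := hη₀.2
        have h1 : logEmbedding K (Additive.ofMul η) = v := hηv
        have : logEmbedding K (Additive.ofMul (η₀⁻¹ * η)) = 0 := by
          have heq : Additive.ofMul (η₀⁻¹ * η) =
            -Additive.ofMul η₀ + Additive.ofMul η := rfl
          rw [heq, map_add, map_neg, h0, h1]; abel
        exact SetLike.mem_coe.mpr (logEmbedding_eq_zero_iff.mp this)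
      · intro a _ b _ h
        exact mul_left_cancel h
  calc (S.ncard : ℝ) ≤ (tors * (f '' S).ncard : ℕ) := by
        exact_mod_cast aux_ncard_le_mul S hSfin f tors hfib
    _ = (tors : ℝ) * ((f '' S).ncard : ℝ) := by push_cast; ring
    _ ≤ (tors : ℝ) * (C₁ * (1 + 2 * Real.log Q)) ^ (rank K) := by
        refine mul_le_mul_of_nonneg_left ?_ (by positivity)
        have h1 : ((f '' S).ncard : ℝ) ≤
            (((unitLattice K : Set ({w : InfinitePlace K // w ≠ w₀} → ℝ)) ∩ Metric.closedBall 0 (2 * Real.log Q)).ncard : ℝ) := by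
          exact_mod_cast Nat.cast_le.mpr (Set.ncard_le_ncard himg
            ((unitLattice_inter_ball_finite K _)))
        refine h1.trans ?_
        have := hlat (2 * Real.log Q) (by positivity)
        simpa [Fintype.card_fin] using this
    _ ≤ (tors : ℝ) * ((2 * C₁) * (1 + Real.log Q)) ^ (rank K) := by
        refine mul_le_mul_of_nonneg_left (pow_le_pow_left₀ (by positivity) (by nlinarith) _)
          (by positivity)
    _ = tors * (2 * C₁) ^ (rank K) * (1 + Real.log Q) ^ (rank K) := by
        rw [mul_pow]; ring

open scoped Classical in
lemma aux_divisors_le_prod (K : Type*) [Field K] [NumberField K] (J : Ideal (𝓞 K)) (hJ : J ≠ 0) :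
    {I : Ideal (𝓞 K) | I ∣ J}.ncard ≤
      ∏ P ∈ (normalizedFactors J).toFinset, ((normalizedFactors J).count P + 1) := by
  classical
  set ns := normalizedFactors J with hns
  set t : Finset ((P : ns.toFinset) → ℕ) :=
    Fintype.piFinset (fun P : ns.toFinset => Finset.range (ns.count P.1 + 1)) with ht
  set F : Ideal (𝓞 K) → ((P : ns.toFinset) → ℕ) :=
    fun I P => (normalizedFactors I).count P.1 with hF
  have hle : ∀ I : Ideal (𝓞 K), I ∣ J → normalizedFactors I ≤ ns := by
    intro I hI
    exact (dvd_iff_normalizedFactors_le_normalizedFactors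
      (ne_zero_of_dvd_ne_zero hJ hI) hJ).mp hI
  have hmaps : ∀ I ∈ {I : Ideal (𝓞 K) | I ∣ J}, F I ∈ (t : Set _) := by
    intro I hI
    simp only [ht, Finset.mem_coe, Fintype.mem_piFinset]
    intro P
    rw [Finset.mem_range, Nat.lt_succ_iff]
    exact Multiset.le_iff_count.mp (hle I hI) P.1
  have hinj : Set.InjOn F {I : Ideal (𝓞 K) | I ∣ J} := by
    intro I₁ h₁ I₂ h₂ h
    have hfe : normalizedFactors I₁ = normalizedFactors I₂ := by
      ext a
      by_cases ha : a ∈ ns.toFinset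
      · exact congrFun h ⟨a, ha⟩
      · rw [Multiset.mem_toFinset] at ha
        have hz : ns.count a = 0 := Multiset.count_eq_zero_of_notMem ha
        have z1 : (normalizedFactors I₁).count a = 0 :=
          Nat.le_zero.mp (hz ▸ Multiset.le_iff_count.mp (hle I₁ h₁) a)
        have z2 : (normalizedFactors I₂).count a = 0 :=
          Nat.le_zero.mp (hz ▸ Multiset.le_iff_count.mp (hle I₂ h₂) a)
        rw [z1, z2]
    have a1 := prod_normalizedFactors (ne_zero_of_dvd_ne_zero hJ h₁)
    have a2 := prod_normalizedFactors (ne_zero_of_dvd_ne_zero hJ h₂)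
    rw [hfe] at a1
    exact associated_iff_eq.mp (a1.symm.trans a2)
  calc {I : Ideal (𝓞 K) | I ∣ J}.ncard ≤ t.card := by
        have := Set.ncard_le_ncard_of_injOn F hmaps hinj t.finite_toSet
        simpa [Set.ncard_coe_finset] using this
    _ = ∏ P ∈ ns.toFinset, (ns.count P + 1) := by
        rw [ht, Fintype.card_piFinset]
        simp only [Finset.card_range]
        exact Finset.prod_coe_sort ns.toFinset (fun P => ns.count P + 1)

set_option maxHeartbeats 1000000 in
lemma aux_ideal_count (K : Type*) [Field K] [NumberField K] {δ : ℝ} (hδ : 0 < δ) :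
    ∃ C : ℝ, 0 < C ∧ ∀ m : ℕ, 1 ≤ m →
      (({I : Ideal (𝓞 K) | Ideal.absNorm I = m}.ncard : ℝ)) ≤ C * (m : ℝ) ^ δ := by
  classical
  set n : ℕ := Module.finrank ℚ K with hn
  have hnpos : 0 < n := Module.finrank_pos
  set δ' : ℝ := δ / n with hδ'
  have hδ'pos : 0 < δ' := by positivity
  set x₂ : ℝ := (2 : ℝ) ^ δ' with hx₂
  have hx₂gt : 1 < x₂ := Real.one_lt_rpow_iff_of_pos (by norm_num) |>.mpr (by norm_num [hδ'pos])
  set Mδ : ℝ := max 1 (1 / (x₂ - 1)) with hMδ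
  have hMδ1 : 1 ≤ Mδ := le_max_left _ _
  have hMδx : 1 ≤ Mδ * (x₂ - 1) := by
    rcases le_max_iff.mp (le_refl Mδ) with h | h
    all_goals {
      have h2 : 1 / (x₂ - 1) ≤ Mδ := le_max_right _ _
      rw [div_le_iff₀ (by linarith)] at h2
      linarith }
  set t₀ : ℕ := ⌈(2 : ℝ) ^ (1 / δ')⌉₊ with ht₀
  set Bs : ℕ := {I : Ideal (𝓞 K) | Ideal.absNorm I ≤ t₀}.ncard with hBs
  refine ⟨Mδ ^ Bs, by positivity, fun m hm => ?_⟩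
  -- the ideal J = (m)
  have hm0 : (m : 𝓞 K) ≠ 0 := Nat.cast_ne_zero.mpr (by omega)
  set J : Ideal (𝓞 K) := Ideal.span {(m : 𝓞 K)} with hJ
  have hJne : J ≠ 0 := by
    rw [hJ, Ne, Ideal.zero_eq_bot, Ideal.span_singleton_eq_bot]
    exact hm0
  have hJnorm : Ideal.absNorm J = m ^ n := by
    rw [hJ, Ideal.absNorm_span_singleton]
    have h2 : Algebra.norm ℤ ((m : ℕ) : 𝓞 K) = (m : ℤ) ^ Module.finrank ℤ (𝓞 K) := by
      have hcast : ((m : ℕ) : 𝓞 K) = algebraMap ℤ (𝓞 K) (m : ℤ) := by push_cast; rfl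
      rw [hcast, Algebra.norm_algebraMap_of_basis (Module.Free.chooseBasis ℤ (𝓞 K)),
        Module.finrank_eq_card_chooseBasisIndex]
    rw [h2, RingOfIntegers.rank, ← hn]
    simp [Int.natAbs_pow]
  -- subset of divisors of J
  have hsub : {I : Ideal (𝓞 K) | Ideal.absNorm I = m} ⊆ {I : Ideal (𝓞 K) | I ∣ J} := by
    intro I hI
    rw [Set.mem_setOf_eq] at hI ⊢
    rw [hJ, Ideal.dvd_iff_le]
    rw [Ideal.span_le, Set.singleton_subset_iff]
    have := Ideal.absNorm_mem I
    rw [hI] at this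
    exact_mod_cast this
  have hdivfin : {I : Ideal (𝓞 K) | I ∣ J}.Finite := by
    refine (Ideal.finite_setOf_absNorm_le (Ideal.absNorm J)).subset ?_
    intro I hI
    exact Nat.le_of_dvd (Nat.pos_of_ne_zero (by
      rw [Ne, Ideal.absNorm_eq_zero_iff]; exact hJne)) (map_dvd Ideal.absNorm hI)
  have step2 : {I : Ideal (𝓞 K) | Ideal.absNorm I = m}.ncard ≤
      {I : Ideal (𝓞 K) | I ∣ J}.ncard := Set.ncard_le_ncard hsub hdivfin
  set ns := normalizedFactors J with hns
  set T := ns.toFinset with hT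
  have step3 := aux_divisors_le_prod K J hJne
  have hprime : ∀ P ∈ T, 2 ≤ Ideal.absNorm P := by
    intro P hP
    have hPprime : Prime P := prime_of_normalized_factor P (Multiset.mem_toFinset.mp hP)
    have h1 : Ideal.absNorm P ≠ 0 := by
      rw [Ne, Ideal.absNorm_eq_zero_iff]; exact hPprime.ne_zero
    have h2 : Ideal.absNorm P ≠ 1 := by
      rw [Ne, Ideal.absNorm_eq_one_iff]
      intro htop; exact hPprime.not_unit (by rw [Ideal.isUnit_iff]; exact htop)
    omega
  have hpoint : ∀ P ∈ T, ((ns.count P + 1 : ℕ) : ℝ) ≤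
      (if ((Ideal.absNorm P : ℝ)) ^ δ' < 2 then Mδ else 1) *
        ((Ideal.absNorm P : ℝ) ^ δ') ^ (ns.count P) := by
    intro P hP
    have hNP : (2 : ℝ) ≤ (Ideal.absNorm P : ℝ) := by exact_mod_cast hprime P hP
    set e := ns.count P with he
    have he0 : (0:ℝ) ≤ (e:ℝ) := Nat.cast_nonneg e
    by_cases hsmall : ((Ideal.absNorm P : ℝ)) ^ δ' < 2
    · rw [if_pos hsmall]
      have hx₂le : x₂ ≤ (Ideal.absNorm P : ℝ) ^ δ' := by
        rw [hx₂]
        exact Real.rpow_le_rpow (by norm_num) hNP hδ'pos.le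
      have hb : 1 + (e:ℝ) * (x₂ - 1) ≤ x₂ ^ e := by
        have h := one_add_mul_le_pow (a := x₂ - 1) (by linarith) e
        calc 1 + (e:ℝ) * (x₂ - 1) = 1 + (e:ℕ) * (x₂ - 1) := by ring
          _ ≤ (1 + (x₂ - 1)) ^ e := h
          _ = x₂ ^ e := by ring_nf
      have h1 : ((e + 1 : ℕ) : ℝ) ≤ Mδ * x₂ ^ e := by
        have hprodd := mul_le_mul_of_nonneg_left hb (by linarith : (0:ℝ) ≤ Mδ)
        push_cast
        nlinarith [hMδ1, hMδx, he0]
      refine h1.trans ?_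
      exact mul_le_mul_of_nonneg_left (pow_le_pow_left₀ (by linarith) hx₂le e) (by linarith)
    · rw [if_neg hsmall, one_mul]
      have h2e : ((e + 1 : ℕ) : ℝ) ≤ (2:ℝ) ^ e := by
        exact_mod_cast Nat.lt_two_pow_self (n := e)
      refine h2e.trans ?_
      exact pow_le_pow_left₀ (by norm_num) (not_lt.mp hsmall) e
  have hprod1 : (∏ P ∈ T, ((ns.count P + 1 : ℕ) : ℝ)) ≤
      (∏ P ∈ T, (if ((Ideal.absNorm P : ℝ)) ^ δ' < 2 then Mδ else 1)) *
      (∏ P ∈ T, ((Ideal.absNorm P : ℝ) ^ δ') ^ (ns.count P)) := by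
    rw [← Finset.prod_mul_distrib]
    exact Finset.prod_le_prod (fun P _ => by positivity) hpoint
  have hsmallcard : (T.filter (fun P => ((Ideal.absNorm P : ℝ)) ^ δ' < 2)).card ≤ Bs := by
    rw [hBs]
    have hsubs : ((T.filter (fun P => ((Ideal.absNorm P : ℝ)) ^ δ' < 2)) : Set (Ideal (𝓞 K)))
        ⊆ {I : Ideal (𝓞 K) | Ideal.absNorm I ≤ t₀} := by
      intro P hP
      simp only [Finset.coe_filter, Set.mem_setOf_eq] at hP
      obtain ⟨hPT, hPs⟩ := hP
      have hNP0 : (0:ℝ) < (Ideal.absNorm P : ℝ) := by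
        have := hprime P hPT
        have : (2:ℝ) ≤ (Ideal.absNorm P : ℝ) := by exact_mod_cast this
        linarith
      have hlt : ((Ideal.absNorm P : ℝ)) < (2:ℝ) ^ (1/δ') := by
        have h1 : (((Ideal.absNorm P : ℝ)) ^ δ') ^ (1/δ') < (2:ℝ) ^ (1/δ') :=
          Real.rpow_lt_rpow (le_of_lt (Real.rpow_pos_of_pos hNP0 _)) hPs (by positivity)
        rwa [← Real.rpow_mul hNP0.le, mul_one_div_cancel hδ'pos.ne', Real.rpow_one] at h1
      rw [Set.mem_setOf_eq]
      have : ((Ideal.absNorm P : ℝ)) ≤ (t₀ : ℝ) := hlt.le.trans (Nat.le_ceil _)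
      exact_mod_cast this
    calc (T.filter (fun P => ((Ideal.absNorm P : ℝ)) ^ δ' < 2)).card
        = ((T.filter (fun P => ((Ideal.absNorm P : ℝ)) ^ δ' < 2)) :
            Set (Ideal (𝓞 K))).ncard := (Set.ncard_coe_finset _).symm
      _ ≤ {I : Ideal (𝓞 K) | Ideal.absNorm I ≤ t₀}.ncard :=
          Set.ncard_le_ncard hsubs (Ideal.finite_setOf_absNorm_le t₀)
  have hifprod : (∏ P ∈ T, (if ((Ideal.absNorm P : ℝ)) ^ δ' < 2 then Mδ else 1)) ≤ Mδ ^ Bs := by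
    rw [Finset.prod_ite, Finset.prod_const, Finset.prod_const, one_pow, mul_one]
    exact pow_le_pow_right₀ hMδ1 hsmallcard
  have hnormprod : (∏ P ∈ T, ((Ideal.absNorm P : ℝ)) ^ (ns.count P)) = ((Ideal.absNorm J : ℕ) : ℝ) := by
    have hJprod : ns.prod = J := associated_iff_eq.mp (prod_normalizedFactors hJne)
    have h1 : Ideal.absNorm J = (ns.map Ideal.absNorm).prod := by
      rw [← hJprod, map_multiset_prod]
    rw [h1, Finset.prod_multiset_map_count]
    push_cast
    rfl
  have hpow : (∏ P ∈ T, ((Ideal.absNorm P : ℝ) ^ δ') ^ (ns.count P))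
      = ((Ideal.absNorm J : ℕ) : ℝ) ^ δ' := by
    have h1 : ∀ P ∈ T, ((Ideal.absNorm P : ℝ) ^ δ') ^ (ns.count P)
        = ((Ideal.absNorm P : ℝ) ^ (ns.count P)) ^ δ' := by
      intro P hP
      rw [← Real.rpow_natCast ((Ideal.absNorm P : ℝ) ^ δ') (ns.count P),
        ← Real.rpow_mul (Nat.cast_nonneg _), mul_comm,
        Real.rpow_mul (Nat.cast_nonneg _), Real.rpow_natCast]
    rw [Finset.prod_congr rfl h1,
      Real.finset_prod_rpow T _ (fun P _ => pow_nonneg (Nat.cast_nonneg _) _) δ', hnormprod]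
  have hfinal : ((Ideal.absNorm J : ℕ) : ℝ) ^ δ' = (m : ℝ) ^ δ := by
    rw [hJnorm]
    push_cast
    rw [← Real.rpow_natCast (m:ℝ) n, ← Real.rpow_mul (Nat.cast_nonneg m)]
    congr 1
    rw [hδ']
    field_simp
  calc ({I : Ideal (𝓞 K) | Ideal.absNorm I = m}.ncard : ℝ)
      ≤ ({I : Ideal (𝓞 K) | I ∣ J}.ncard : ℝ) := Nat.cast_le.mpr step2
    _ ≤ ((∏ P ∈ T, (ns.count P + 1) : ℕ) : ℝ) := Nat.cast_le.mpr step3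
    _ = ∏ P ∈ T, ((ns.count P + 1 : ℕ) : ℝ) := by push_cast; rfl
    _ ≤ (∏ P ∈ T, (if ((Ideal.absNorm P : ℝ)) ^ δ' < 2 then Mδ else 1)) *
      (∏ P ∈ T, ((Ideal.absNorm P : ℝ) ^ δ') ^ (ns.count P)) := hprod1
    _ ≤ Mδ ^ Bs * (((Ideal.absNorm J : ℕ) : ℝ) ^ δ') := by
        rw [hpow]
        refine mul_le_mul_of_nonneg_right hifprod ?_
        positivity
    _ = Mδ ^ Bs * (m : ℝ) ^ δ := by rw [hfinal]

lemma aux_log_pow_le {a : ℝ} (ha : 0 ≤ a) (r : ℕ) {δ : ℝ} (hδ : 0 < δ) :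
    ∃ C : ℝ, 0 < C ∧ ∀ x : ℝ, 2 ≤ x → (1 + a * Real.log x) ^ r ≤ C * x ^ δ := by
  set s : ℝ := δ / (r + 1) with hs
  have hspos : 0 < s := by positivity
  set c₀ : ℝ := 1 + a / s with hc
  have hc₀ : 1 ≤ c₀ := by
    rw [hc]; nlinarith [div_nonneg ha hspos.le]
  refine ⟨c₀ ^ r, by positivity, fun x hx => ?_⟩
  have hx0 : (0:ℝ) < x := by linarith
  have hx1 : (1:ℝ) ≤ x := by linarith
  have hlognn : 0 ≤ Real.log x := Real.log_nonneg hx1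
  have hlog : Real.log x ≤ x ^ s / s := Real.log_le_rpow_div hx0.le hspos
  have hxs1 : (1:ℝ) ≤ x ^ s := Real.one_le_rpow hx1 hspos.le
  have h1 : 1 + a * Real.log x ≤ c₀ * x ^ s := by
    have h2 : a * Real.log x ≤ (a / s) * x ^ s := by
      calc a * Real.log x ≤ a * (x ^ s / s) := mul_le_mul_of_nonneg_left hlog ha
        _ = (a / s) * x ^ s := by ring
    have h3 : (0:ℝ) ≤ a / s := div_nonneg ha hspos.le
    rw [hc]
    nlinarith
  have h2 : (1 + a * Real.log x) ^ r ≤ (c₀ * x ^ s) ^ r := by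
    apply pow_le_pow_left₀ (by nlinarith) h1
  refine h2.trans ?_
  rw [mul_pow, ← Real.rpow_natCast (x ^ s) r, ← Real.rpow_mul hx0.le]
  refine mul_le_mul_of_nonneg_left ?_ (by positivity)
  refine Real.rpow_le_rpow_of_exponent_le hx1 ?_
  rw [hs, div_mul_eq_mul_div, div_le_iff₀ (by positivity)]
  nlinarith [Nat.cast_nonneg (α := ℝ) r]

theorem norm_fiber_count_le (K : Type*) [Field K] [NumberField K] :
    ∀ ε : ℝ, 0 < ε → ∃ C : ℝ, 0 < C ∧ ∀ P : ℝ, 2 ≤ P → ∀ u : ℤ,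
      (Nat.card {z : 𝓞 K //
          Algebra.norm ℚ (algebraMap (𝓞 K) K z) = (u : ℚ) ∧
          ∀ σ : K →+* ℂ, ‖σ (algebraMap (𝓞 K) K z)‖ ≤ P} : ℝ)
        ≤ C * P ^ ε := by
  intro ε hε
  classical
  set n : ℕ := Module.finrank ℚ K with hn
  have hnpos : 0 < n := Module.finrank_pos
  obtain ⟨C₃, hC₃, hideal⟩ := aux_ideal_count K (δ := ε / (2 * n)) (by positivity)
  obtain ⟨C₂, hC₂, hunits⟩ := aux_units_box_count K
  obtain ⟨C₄, hC₄, hlogp⟩ := aux_log_pow_le (a := 2 * n)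
    (by positivity) (rank K) (δ := ε / 2) (by positivity)
  refine ⟨1 + C₂ * C₄ * C₃, by positivity, fun P hP u => ?_⟩
  have hP0 : (0:ℝ) < P := by linarith
  have hP1 : (1:ℝ) ≤ P := by linarith
  have hPε1 : (1:ℝ) ≤ P ^ ε := Real.one_le_rpow hP1 hε.le
  set S : Set (𝓞 K) := {z | Algebra.norm ℚ (algebraMap (𝓞 K) K z) = (u : ℚ) ∧
    ∀ σ : K →+* ℂ, ‖σ (algebraMap (𝓞 K) K z)‖ ≤ P} with hS
  have hcard : (Nat.card {z : 𝓞 K //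
      Algebra.norm ℚ (algebraMap (𝓞 K) K z) = (u : ℚ) ∧
      ∀ σ : K →+* ℂ, ‖σ (algebraMap (𝓞 K) K z)‖ ≤ P}) = S.ncard :=
    Nat.card_coe_set_eq S
  rw [hcard]
  have hSfin : S.Finite := by
    have h := Embeddings.finite_of_norm_le K ℂ P
    refine Set.Finite.of_finite_image (f := fun z : 𝓞 K => algebraMap (𝓞 K) K z)
      (h.subset ?_) ?_
    · rintro x ⟨z, hz, rfl⟩
      exact ⟨(RingOfIntegers.isIntegral_coe z), fun φ => by
        simpa using hz.2 φ⟩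
    · intro a _ b _ hab
      exact RingOfIntegers.coe_injective hab
  by_cases hu : u = 0
  · -- norm zero implies z = 0
    have hsub0 : S ⊆ {0} := by
      intro z hz
      have h0 : Algebra.norm ℚ (algebraMap (𝓞 K) K z) = 0 := by
        rw [hz.1, hu]; simp
      have h1 : algebraMap (𝓞 K) K z = 0 := Algebra.norm_eq_zero_iff.mp h0
      have h2 : z = 0 := by
        apply RingOfIntegers.coe_injective
        show algebraMap (𝓞 K) K z = algebraMap (𝓞 K) K 0
        rw [h1, map_zero]
      simp [h2]
    have : (S.ncard : ℝ) ≤ 1 := by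
      have := Set.ncard_le_ncard hsub0 (Set.finite_singleton 0)
      simp only [Set.ncard_singleton] at this
      exact_mod_cast this
    have hcpos : (0:ℝ) < 1 + C₂ * C₄ * C₃ := by positivity
    have h3 : (1 + C₂ * C₄ * C₃) * 1 ≤ (1 + C₂ * C₄ * C₃) * P ^ ε :=
      mul_le_mul_of_nonneg_left hPε1 hcpos.le
    linarith [mul_pos (mul_pos hC₂ hC₄) hC₃]
  -- now u ≠ 0
  set m : ℕ := u.natAbs with hm
  have hm1 : 1 ≤ m := by
    have := Int.natAbs_pos.mpr hu; omega
  have hwub : ∀ z ∈ S, ∀ w : InfinitePlace K, w (algebraMap (𝓞 K) K z) ≤ P := by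
    intro z hz w
    rw [← InfinitePlace.mk_embedding w, InfinitePlace.apply]
    exact hz.2 _
  have hznz : ∀ z ∈ S, algebraMap (𝓞 K) K z ≠ 0 := by
    intro z hz h0
    apply hu
    have h1 := hz.1
    rw [h0, Algebra.norm_zero] at h1
    exact_mod_cast h1.symm
  have hprodf : ∀ z ∈ S,
      ∏ w : InfinitePlace K, (w (algebraMap (𝓞 K) K z)) ^ (mult w) = (m : ℝ) := by
    intro z hz
    rw [InfinitePlace.prod_eq_abs_norm, hz.1]
    rw [hm]
    push_cast [Nat.cast_natAbs]
    norm_cast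
  have hwpos : ∀ z ∈ S, ∀ w : InfinitePlace K, 0 < w (algebraMap (𝓞 K) K z) := by
    intro z hz w
    exact InfinitePlace.pos_iff.mpr (hznz z hz)
  -- upper bound for m
  have hm_le : ∀ z ∈ S, (m : ℝ) ≤ P ^ n := by
    intro z hz
    rw [← hprodf z hz]
    calc ∏ w : InfinitePlace K, (w (algebraMap (𝓞 K) K z)) ^ (mult w)
        ≤ ∏ w : InfinitePlace K, P ^ (mult w) := by
          refine Finset.prod_le_prod (fun w _ => pow_nonneg (hwpos z hz w).le _)
            (fun w _ => pow_le_pow_left₀ (hwpos z hz w).le (hwub z hz w) _)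
      _ = P ^ (∑ w : InfinitePlace K, mult w) := by rw [Finset.prod_pow_eq_pow_sum]
      _ = P ^ n := by rw [InfinitePlace.sum_mult_eq, hn]
  -- lower bound for each place
  have hwlb : ∀ z ∈ S, ∀ w : InfinitePlace K, (P ^ n)⁻¹ ≤ w (algebraMap (𝓞 K) K z) := by
    intro z hz w₁
    have hPn1 : (1:ℝ) ≤ P ^ n := one_le_pow₀ hP1
    rcases le_or_gt 1 (w₁ (algebraMap (𝓞 K) K z)) with h | h
    · calc (P ^ n)⁻¹ ≤ 1 := inv_le_one_of_one_le₀ hPn1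
        _ ≤ _ := h
    · -- pull out the factor at w₁
      have hsplit := Finset.mul_prod_erase Finset.univ
        (fun w : InfinitePlace K => (w (algebraMap (𝓞 K) K z)) ^ (mult w))
        (Finset.mem_univ w₁)
      rw [hprodf z hz] at hsplit
      have hrest_pos : 0 < ∏ w ∈ Finset.univ.erase w₁,
          (w (algebraMap (𝓞 K) K z)) ^ (mult w) :=
        Finset.prod_pos (fun w _ => pow_pos (hwpos z hz w) _)
      have hrest_le : ∏ w ∈ Finset.univ.erase w₁,
          (w (algebraMap (𝓞 K) K z)) ^ (mult w) ≤ P ^ n := by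
        calc ∏ w ∈ Finset.univ.erase w₁, (w (algebraMap (𝓞 K) K z)) ^ (mult w)
            ≤ ∏ w ∈ Finset.univ.erase w₁, P ^ (mult w) := by
              refine Finset.prod_le_prod (fun w _ => pow_nonneg (hwpos z hz w).le _)
                (fun w _ => pow_le_pow_left₀ (hwpos z hz w).le (hwub z hz w) _)
          _ = P ^ (∑ w ∈ Finset.univ.erase w₁, mult w) := by rw [Finset.prod_pow_eq_pow_sum]
          _ ≤ P ^ n := by
              refine pow_le_pow_right₀ hP1 ?_
              rw [hn, ← InfinitePlace.sum_mult_eq (K := K)]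
              exact Finset.sum_le_sum_of_subset (Finset.subset_univ _)
      have hmono : (m:ℝ) / P ^ n ≤ (w₁ (algebraMap (𝓞 K) K z)) ^ (mult w₁) := by
        rw [div_le_iff₀ (pow_pos hP0 n)]
        calc (m:ℝ) = (w₁ (algebraMap (𝓞 K) K z)) ^ (mult w₁) *
              ∏ w ∈ Finset.univ.erase w₁, (w (algebraMap (𝓞 K) K z)) ^ (mult w) := hsplit.symm
          _ ≤ (w₁ (algebraMap (𝓞 K) K z)) ^ (mult w₁) * P ^ n :=
              mul_le_mul_of_nonneg_left hrest_le (pow_nonneg (hwpos z hz w₁).le _)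
      have hmult0 : mult w₁ ≠ 0 := by
        rw [mult]; split_ifs <;> norm_num
      have hps : (w₁ (algebraMap (𝓞 K) K z)) ^ (mult w₁) ≤ w₁ (algebraMap (𝓞 K) K z) :=
        pow_le_of_le_one (hwpos z hz w₁).le h.le hmult0
      have h1m : (P ^ n)⁻¹ ≤ (m:ℝ) / P ^ n := by
        rw [inv_eq_one_div]
        gcongr
        exact_mod_cast hm1
      exact h1m.trans (hmono.trans hps)
  -- the ideal map and unit box
  set fI : 𝓞 K → Ideal (𝓞 K) := fun z => Ideal.span {z} with hfI
  set Q : ℝ := P ^ (2 * n) with hQdef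
  have hQ1 : 1 ≤ Q := one_le_pow₀ hP1
  set U : Set (𝓞 K)ˣ := {η : (𝓞 K)ˣ | ∀ w : InfinitePlace K,
    Q⁻¹ ≤ w (algebraMap (𝓞 K) K (η : 𝓞 K)) ∧ w (algebraMap (𝓞 K) K (η : 𝓞 K)) ≤ Q} with hU
  have hUfin : U.Finite := aux_units_box_finite K Q
  have hpow_le : P ^ (n + 1) ≤ P ^ (2 * n) := pow_le_pow_right₀ hP1 (by omega)
  have hfib : ∀ I : Ideal (𝓞 K), (S ∩ fI ⁻¹' {I}).ncard ≤ U.ncard := by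
    intro I
    rcases (S ∩ fI ⁻¹' {I}).eq_empty_or_nonempty with hemp | ⟨z₀, hz₀⟩
    · simp [hemp]
    · have hz₀S : z₀ ∈ S := hz₀.1
      set g : 𝓞 K → (𝓞 K)ˣ := fun z =>
        if h : ∃ η : (𝓞 K)ˣ, z₀ * η = z then h.choose else 1 with hg
      have key : ∀ z ∈ S ∩ fI ⁻¹' {I}, z₀ * (g z : 𝓞 K) = z := by
        rintro z ⟨hzS, hzI⟩
        have hspan : Ideal.span ({z₀} : Set (𝓞 K)) = Ideal.span {z} := by
          have h1 : Ideal.span ({z₀} : Set (𝓞 K)) = I := hz₀.2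
          have h2 : Ideal.span ({z} : Set (𝓞 K)) = I := hzI
          rw [h1, h2]
        have hassoc : Associated z₀ z :=
          Ideal.span_singleton_eq_span_singleton.mp hspan
        have hex : ∃ η : (𝓞 K)ˣ, z₀ * η = z := hassoc
        rw [hg]
        simp only [dif_pos hex]
        exact hex.choose_spec
      refine Set.ncard_le_ncard_of_injOn g ?_ ?_ hUfin
      · intro z hzmem
        have hzS := hzmem.1
        have hgz := key z hzmem
        rw [hU, Set.mem_setOf_eq]
        intro w
        have hA : (P ^ n)⁻¹ ≤ w (algebraMap (𝓞 K) K z₀) := hwlb z₀ hz₀S w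
        have hA' : w (algebraMap (𝓞 K) K z₀) ≤ P := hwub z₀ hz₀S w
        have hApos : 0 < w (algebraMap (𝓞 K) K z₀) := hwpos z₀ hz₀S w
        have hC : (P ^ n)⁻¹ ≤ w (algebraMap (𝓞 K) K z) := hwlb z hzS w
        have hC' : w (algebraMap (𝓞 K) K z) ≤ P := hwub z hzS w
        have hCpos : 0 < w (algebraMap (𝓞 K) K z) := hwpos z hzS w
        have heq : w (algebraMap (𝓞 K) K z)
            = w (algebraMap (𝓞 K) K z₀) * w (algebraMap (𝓞 K) K ((g z : 𝓞 K))) := by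
          conv_lhs => rw [← hgz]
          rw [map_mul, map_mul]
        have hB : w (algebraMap (𝓞 K) K ((g z : 𝓞 K)))
            = w (algebraMap (𝓞 K) K z) / w (algebraMap (𝓞 K) K z₀) := by
          rw [heq]; field_simp
        have hPn_pos : (0:ℝ) < P ^ n := pow_pos hP0 n
        constructor
        · -- lower bound
          rw [hB, hQdef]
          have h1 : (P ^ n)⁻¹ / P ≤ w (algebraMap (𝓞 K) K z) / w (algebraMap (𝓞 K) K z₀) :=
            div_le_div₀ hCpos.le hC hApos hA'
          have h2 : ((P:ℝ) ^ (2*n))⁻¹ ≤ (P ^ n)⁻¹ / P := by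
            rw [div_eq_mul_inv, ← mul_inv, ← pow_succ]
            exact inv_anti₀ (pow_pos hP0 _) hpow_le
          exact h2.trans h1
        · -- upper bound
          rw [hB, hQdef]
          calc w (algebraMap (𝓞 K) K z) / w (algebraMap (𝓞 K) K z₀)
              ≤ P / (P ^ n)⁻¹ := div_le_div₀ hP0.le hC' (by positivity) hA
            _ = P ^ (n + 1) := by
                rw [div_eq_mul_inv, inv_inv, ← pow_succ']
            _ ≤ P ^ (2 * n) := hpow_le
      · intro z₁ h₁ z₂ h₂ hgz
        have k₁ := key z₁ h₁
        have k₂ := key z₂ h₂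
        rw [← k₁, ← k₂, hgz]
  have himg : fI '' S ⊆ {I : Ideal (𝓞 K) | Ideal.absNorm I = m} := by
    rintro _ ⟨z, hz, rfl⟩
    rw [Set.mem_setOf_eq, hfI]
    show Ideal.absNorm (Ideal.span {z}) = m
    rw [Ideal.absNorm_span_singleton]
    have h1 : ((Algebra.norm ℤ z : ℤ) : ℚ) = ((u : ℤ) : ℚ) := by
      rw [Algebra.coe_norm_int]
      exact hz.1
    have h2 : Algebra.norm ℤ z = u := by exact_mod_cast h1
    rw [h2, hm]
  rcases S.eq_empty_or_nonempty with hSe | hSne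
  · rw [hSe]
    simp only [Set.ncard_empty, Nat.cast_zero]
    positivity
  · obtain ⟨z₁, hz₁⟩ := hSne
    have hmP : (m:ℝ) ≤ P ^ n := hm_le z₁ hz₁
    have hP_eps : ((P:ℝ) ^ (n:ℕ)) ^ (ε / (2 * n)) = P ^ (ε / 2) := by
      rw [← Real.rpow_natCast P n, ← Real.rpow_mul hP0.le]
      congr 1
      have : (n:ℝ) ≠ 0 := Nat.cast_ne_zero.mpr (by omega)
      field_simp
    have hlogQ : Real.log Q = 2 * (n:ℝ) * Real.log P := by
      rw [hQdef, Real.log_pow]; push_cast; ring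
    calc (S.ncard : ℝ) ≤ ((U.ncard * (fI '' S).ncard : ℕ) : ℝ) := by
          exact_mod_cast aux_ncard_le_mul S hSfin fI U.ncard hfib
      _ = (U.ncard : ℝ) * ((fI '' S).ncard : ℝ) := by push_cast; ring
      _ ≤ (C₂ * (1 + Real.log Q) ^ rank K) * (C₃ * (m:ℝ) ^ (ε / (2 * (n:ℝ)))) := by
          have hlogQnn : 0 ≤ Real.log Q := Real.log_nonneg hQ1
          refine mul_le_mul (hunits Q hQ1) ?_ (Nat.cast_nonneg _)
            (mul_nonneg hC₂.le (pow_nonneg (by linarith) _))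
          refine le_trans ?_ (hideal m hm1)
          exact_mod_cast Nat.cast_le.mpr (Set.ncard_le_ncard himg
            (Ideal.finite_setOf_absNorm_eq m))
      _ ≤ (C₂ * (C₄ * P ^ (ε/2))) * (C₃ * P ^ (ε/2)) := by
          refine mul_le_mul ?_ ?_ (by positivity) (by positivity)
          · rw [hlogQ]
            exact mul_le_mul_of_nonneg_left (hlogp P hP) hC₂.le
          · refine mul_le_mul_of_nonneg_left ?_ hC₃.le
            calc (m:ℝ) ^ (ε/(2*(n:ℝ))) ≤ (P ^ (n:ℕ)) ^ (ε/(2*(n:ℝ))) :=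
                Real.rpow_le_rpow (Nat.cast_nonneg m) hmP (by positivity)
              _ = P ^ (ε/2) := hP_eps
      _ = (C₂ * C₄ * C₃) * (P ^ (ε/2) * P ^ (ε/2)) := by ring
      _ = (C₂ * C₄ * C₃) * P ^ ε := by
          rw [← Real.rpow_add hP0]; norm_num
      _ ≤ (1 + C₂ * C₄ * C₃) * P ^ ε := by
          have h0 : (0:ℝ) ≤ P ^ ε := by positivity
          nlinarith
end

section
/- Let F be a field and let L₁,…,L_{2r} be nonzero linear (affine-linear) polynomials in r variables t = (t₁,…,t_r) over F such that, with L_{2r+1} = 1, the set {L₁,…,L_{2r}, 1} satisfies Condition I. Then the F-vector space Λ = {λ = (λ₁,…,λ_{2r+1}) ∈ F^{2r+1} : Σ_{i=1}^{2r+1} λ_i L_i(t) = 0 identically in t} has dimension r, and for any basis λ^{(1)},…,λ^{(r)} of Λ and any nonzero scalars ρ₁,…,ρ_{2r+1} ∈ F*, the (r × (2r+1))-matrix A = (a_ij) with a_ij = λ_j^{(i)}·ρ_j satisfies Condition II. -/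
/-!
STATEMENT 16: the space Λ of linear relations among L₁,…,L_{2r},1 satisfying Condition I
has dimension r, and any matrix built from a basis of Λ scaled columnwise by nonzero
scalars satisfies Condition II.
-/

/-- Condition II for an `(r × (2r+1))`-matrix: removing any one column, the remaining `2r`
columns can be partitioned into two `(r × r)`-matrices of full rank. -/
def CondII {F : Type*} [Field F] {r : ℕ} (A : Matrix (Fin r) (Fin (2 * r + 1)) F) : Prop :=
  ∀ j₀ : Fin (2 * r + 1), ∃ σ τ : Fin r → Fin (2 * r + 1),
    Function.Injective σ ∧ Function.Injective τ ∧
    (∀ i, σ i ≠ j₀) ∧ (∀ i, τ i ≠ j₀) ∧ (∀ i i', σ i ≠ τ i') ∧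
    (Matrix.of fun i k : Fin r => A i (σ k)).det ≠ 0 ∧
    (Matrix.of fun i k : Fin r => A i (τ k)).det ≠ 0

/-- Condition I for the family `𝓛 = {L₀, …, L_{2r}}` (with one of them the constant `1`):
for each member `L_{i₀}` there are subsets `𝓐, 𝓑 ⊆ 𝓛` of linearly independent functions with
`|𝓐| = |𝓑| = r+1` and `𝓐 ∩ 𝓑 = {L_{i₀}}`. -/
def CondI {F : Type*} [Field F] {r : ℕ} (L : Fin (2 * r + 1) → MvPolynomial (Fin r) F) : Prop :=
  ∀ i₀ : Fin (2 * r + 1), ∃ A B : Finset (Fin (2 * r + 1)),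
    i₀ ∈ A ∧ i₀ ∈ B ∧ A.card = r + 1 ∧ B.card = r + 1 ∧
    (∀ j ∈ A, ∀ k ∈ B, L j = L k → j = i₀ ∧ k = i₀) ∧
    LinearIndependent F (fun j : A => L j.1) ∧
    LinearIndependent F (fun k : B => L k.1)

section AuxRel
open scoped Classical
variable {F : Type*} [Field F] {r : ℕ}

private lemma mem_span_degOne {p : MvPolynomial (Fin r) F} (h : p.totalDegree ≤ 1) :
    p ∈ Submodule.span F
      ((insert (1 : MvPolynomial (Fin r) F) (Finset.image MvPolynomial.X Finset.univ) :
        Finset (MvPolynomial (Fin r) F)) : Set (MvPolynomial (Fin r) F)) := by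
  have key : (∑ m ∈ p.support, MvPolynomial.monomial m (MvPolynomial.coeff m p)) ∈
      Submodule.span F
      ((insert (1 : MvPolynomial (Fin r) F) (Finset.image MvPolynomial.X Finset.univ) :
        Finset (MvPolynomial (Fin r) F)) : Set (MvPolynomial (Fin r) F)) := by
    refine Submodule.sum_mem _ fun m hm => ?_
    have hd : (m.sum fun _ e => e) ≤ 1 := le_trans (MvPolynomial.le_totalDegree hm) h
    rcases eq_or_ne m 0 with h0 | h0
    · subst h0
      have h1 : (MvPolynomial.monomial (0 : Fin r →₀ ℕ)) (MvPolynomial.coeff 0 p)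
          = (MvPolynomial.coeff 0 p) • (1 : MvPolynomial (Fin r) F) := by
        rw [MvPolynomial.smul_eq_C_mul, mul_one, MvPolynomial.C_apply]
      rw [h1]
      exact Submodule.smul_mem _ _ (Submodule.subset_span (by simp))
    · obtain ⟨j, hj⟩ : ∃ j, m j ≠ 0 := by
        by_contra hc
        push_neg at hc
        exact h0 (Finsupp.ext fun a => hc a)
      have hjs : j ∈ m.support := Finsupp.mem_support_iff.mpr hj
      have hsum : (m.sum fun _ e => e) = ∑ a ∈ m.support, m a := rfl
      have hmj : m j ≤ 1 := by
        calc m j ≤ ∑ a ∈ m.support, m a := Finset.single_le_sum (fun _ _ => Nat.zero_le _) hjs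
        _ ≤ 1 := by rw [← hsum]; exact hd
      have hmj1 : m j = 1 := le_antisymm hmj (Nat.one_le_iff_ne_zero.mpr hj)
      have hm : m = Finsupp.single j 1 := by
        rw [Finsupp.eq_single_iff]
        refine ⟨?_, hmj1⟩
        intro a ha
        simp only [Finset.mem_singleton]
        by_contra hne
        have hpair : ({j, a} : Finset (Fin r)) ⊆ m.support := by
          intro x hx
          rcases Finset.mem_insert.mp hx with rfl | hx
          · exact hjs
          · rwa [Finset.mem_singleton.mp hx]
        have h2 : m j + m a ≤ ∑ b ∈ m.support, m b := by
          rw [← Finset.sum_pair (Ne.symm hne)]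
          exact Finset.sum_le_sum_of_subset hpair
        have ha1 : 1 ≤ m a := Nat.one_le_iff_ne_zero.mpr (Finsupp.mem_support_iff.mp ha)
        rw [← hsum] at h2
        omega
      subst hm
      have h1 : (MvPolynomial.monomial (Finsupp.single j 1))
            (MvPolynomial.coeff (Finsupp.single j 1) p)
          = (MvPolynomial.coeff (Finsupp.single j 1) p) •
            (MvPolynomial.X j : MvPolynomial (Fin r) F) := by
        rw [MvPolynomial.X, MvPolynomial.smul_monomial, smul_eq_mul, mul_one]
      rw [h1]
      refine Submodule.smul_mem _ _ (Submodule.subset_span ?_)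
      simp
  rw [← p.as_sum] at key
  exact key

private lemma vanish_aux (L : Fin (2 * r + 1) → MvPolynomial (Fin r) F)
    (T : Finset (Fin (2 * r + 1)))
    (hT : LinearIndependent F (fun k : T => L k.1))
    (lam : Fin (2 * r + 1) → F) (hrel : ∑ j, lam j • L j = 0)
    (hsupp : ∀ j ∉ T, lam j = 0) : lam = 0 := by
  have h1 : ∑ j ∈ T, lam j • L j = 0 := by
    rw [← hrel]
    refine Finset.sum_subset (Finset.subset_univ T) fun j _ hj => ?_
    rw [hsupp j hj, zero_smul]
  have h2 : ∑ k : T, lam k • L k = 0 := by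
    rw [← Finset.sum_attach T (fun j => lam j • L j)] at h1
    exact h1
  have h3 := Fintype.linearIndependent_iff.mp hT (fun k => lam k) h2
  funext j
  by_cases hj : j ∈ T
  · exact h3 ⟨j, hj⟩
  · exact hsupp j hj

private lemma det_aux (L : Fin (2 * r + 1) → MvPolynomial (Fin r) F)
    (bΛ : Module.Basis (Fin r) F (LinearMap.ker (Fintype.linearCombination F L)))
    (ρ : Fin (2 * r + 1) → F) (hρ : ∀ j, ρ j ≠ 0)
    (T : Finset (Fin (2 * r + 1))) (hT : LinearIndependent F (fun k : T => L k.1))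
    (σ : Fin r → Fin (2 * r + 1)) (hcover : ∀ j ∉ T, ∃ k, σ k = j) :
    (Matrix.of fun i k : Fin r =>
      ((bΛ i : Fin (2 * r + 1) → F) (σ k)) * ρ (σ k)).det ≠ 0 := by
  intro hdet
  obtain ⟨v, hv0, hvmul⟩ := Matrix.exists_vecMul_eq_zero_iff.mpr hdet
  set lamel : LinearMap.ker (Fintype.linearCombination F L) := ∑ i, v i • bΛ i with hlamel
  set lam : Fin (2 * r + 1) → F := (lamel : Fin (2 * r + 1) → F) with hlamdef
  have hlamapp : ∀ j, lam j = ∑ i, v i * (bΛ i : Fin (2 * r + 1) → F) j := by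
    intro j
    simp only [hlamdef, hlamel, AddSubmonoidClass.coe_finset_sum, SetLike.val_smul,
      Finset.sum_apply, Pi.smul_apply, smul_eq_mul]
  have hσ0 : ∀ k, lam (σ k) = 0 := by
    intro k
    have h1 := congrFun hvmul k
    simp only [Matrix.vecMul, dotProduct, Matrix.of_apply, Pi.zero_apply] at h1
    have h2 : (∑ i, v i * (bΛ i : Fin (2 * r + 1) → F) (σ k)) * ρ (σ k) = 0 := by
      rw [Finset.sum_mul]
      rw [← h1]
      exact Finset.sum_congr rfl fun i _ => by ring
    rcases mul_eq_zero.mp h2 with h3 | h3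
    · rw [hlamapp]; exact h3
    · exact absurd h3 (hρ _)
  have hrel : ∑ j, lam j • L j = 0 := by
    have := lamel.2
    rw [LinearMap.mem_ker, Fintype.linearCombination_apply] at this
    exact this
  have hsupp : ∀ j ∉ T, lam j = 0 := fun j hj => by
    obtain ⟨k, rfl⟩ := hcover j hj
    exact hσ0 k
  have hlam0 : lam = 0 := vanish_aux L T hT lam hrel hsupp
  have hlamel0 : lamel = 0 := by
    ext1
    rw [show ((lamel : Fin (2 * r + 1) → F)) = lam from rfl, hlam0]
    rfl
  have hv : ∀ i, v i = 0 :=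
    Fintype.linearIndependent_iff.mp bΛ.linearIndependent v (by rw [← hlamel]; exact hlamel0)
  exact hv0 (funext hv)

end AuxRel

theorem relation_space_of_condI {F : Type*} [Field F] (r : ℕ)
    (L : Fin (2 * r + 1) → MvPolynomial (Fin r) F)
    (hdeg : ∀ i, (L i).totalDegree ≤ 1) (hne : ∀ i, L i ≠ 0)
    (hlast : L ⟨2 * r, by omega⟩ = 1)
    (hI : CondI L) :
    Module.finrank F (LinearMap.ker (Fintype.linearCombination F L)) = r ∧
    ∀ (bΛ : Module.Basis (Fin r) F (LinearMap.ker (Fintype.linearCombination F L)))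
      (ρ : Fin (2 * r + 1) → F), (∀ j, ρ j ≠ 0) →
      CondII (Matrix.of fun i j => ((bΛ i : Fin (2 * r + 1) → F) j) * ρ j) := by
  classical
  constructor
  · -- dimension count
    obtain ⟨A, B, hA0, _hB0, hcA, _hcB, _hkey, hliA, _hliB⟩ := hI ⟨2 * r, by omega⟩
    have hrank : Module.finrank F
        (LinearMap.range (Fintype.linearCombination F L)) = r + 1 := by
      rw [Fintype.range_linearCombination]
      have hfin : FiniteDimensional F (Submodule.span F (Set.range L)) :=
        FiniteDimensional.span_of_finite F (Set.finite_range L)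
      refine le_antisymm ?_ ?_
      · -- upper bound via degree ≤ 1
        set W : Finset (MvPolynomial (Fin r) F) :=
          insert (1 : MvPolynomial (Fin r) F) (Finset.image MvPolynomial.X Finset.univ) with hW
        have hle : Submodule.span F (Set.range L) ≤ Submodule.span F
            (W : Set (MvPolynomial (Fin r) F)) := by
          rw [Submodule.span_le]
          rintro _ ⟨i, rfl⟩
          exact mem_span_degOne (hdeg i)
        have h1 : Module.finrank F (Submodule.span F (Set.range L)) ≤
            Module.finrank F (Submodule.span F (W : Set (MvPolynomial (Fin r) F))) :=
          Submodule.finrank_mono hle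
        have h2 := finrank_span_finset_le_card (R := F) W
        have h3 : W.card ≤ r + 1 := by
          rw [hW]
          refine le_trans (Finset.card_insert_le _ _) ?_
          have := Finset.card_image_le (s := (Finset.univ : Finset (Fin r)))
            (f := (MvPolynomial.X : Fin r → MvPolynomial (Fin r) F))
          simp only [Finset.card_univ, Fintype.card_fin] at this
          omega
        unfold Set.finrank at h2
        omega
      · -- lower bound via Condition I
        have hsub : Submodule.span F (Set.range fun j : A => L j.1) ≤
            Submodule.span F (Set.range L) := by
          refine Submodule.span_mono ?_
          rintro _ ⟨j, rfl⟩
          exact ⟨j.1, rfl⟩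
        have h1 : Module.finrank F (Submodule.span F (Set.range fun j : A => L j.1))
            = r + 1 := by
          rw [finrank_span_eq_card hliA, Fintype.card_coe, hcA]
        rw [← h1]
        exact Submodule.finrank_mono hsub
    have hrn := LinearMap.finrank_range_add_finrank_ker (Fintype.linearCombination F L)
    rw [hrank] at hrn
    have hpi : Module.finrank F (Fin (2 * r + 1) → F) = 2 * r + 1 := by
      rw [Module.finrank_pi]
      simp
    rw [hpi] at hrn
    omega
  · -- Condition II
    intro bΛ ρ hρ j₀
    obtain ⟨A, B, hA0, hB0, hcA, hcB, hkey, hliA, hliB⟩ := hI j₀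
    have hint : A ∩ B = {j₀} := by
      ext j
      simp only [Finset.mem_inter, Finset.mem_singleton]
      constructor
      · rintro ⟨hja, hjb⟩
        exact (hkey j hja j hjb rfl).1
      · rintro rfl
        exact ⟨hA0, hB0⟩
    have huniv : A ∪ B = Finset.univ := by
      apply Finset.eq_univ_of_card
      have hc := Finset.card_union_add_card_inter A B
      rw [hint, Finset.card_singleton, hcA, hcB] at hc
      simp only [Finset.card_univ, Fintype.card_fin]
      omega
    have hcardA : (A.erase j₀).card = r := by
      rw [Finset.card_erase_of_mem hA0, hcA]
      omega
    have hcardB : (B.erase j₀).card = r := by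
      rw [Finset.card_erase_of_mem hB0, hcB]
      omega
    set eA := (A.erase j₀).equivFinOfCardEq hcardA with heA
    set eB := (B.erase j₀).equivFinOfCardEq hcardB with heB
    refine ⟨fun k => (eA.symm k : Fin (2 * r + 1)), fun k => (eB.symm k : Fin (2 * r + 1)),
      ?_, ?_, ?_, ?_, ?_, ?_, ?_⟩
    · exact fun a b h => eA.symm.injective (Subtype.ext h)
    · exact fun a b h => eB.symm.injective (Subtype.ext h)
    · exact fun i => Finset.ne_of_mem_erase (eA.symm i).2
    · exact fun i => Finset.ne_of_mem_erase (eB.symm i).2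
    · intro i i' h
      have h1 : ((eA.symm i : Fin (2 * r + 1))) ∈ A.erase j₀ := (eA.symm i).2
      have h' : ((eA.symm i : Fin (2 * r + 1))) = (eB.symm i' : Fin (2 * r + 1)) := h
      have h2 : ((eA.symm i : Fin (2 * r + 1))) ∈ B.erase j₀ := by
        rw [h']; exact (eB.symm i').2
      have h3 : ((eA.symm i : Fin (2 * r + 1))) ∈ A ∩ B :=
        Finset.mem_inter.mpr ⟨Finset.mem_of_mem_erase h1, Finset.mem_of_mem_erase h2⟩
      rw [hint, Finset.mem_singleton] at h3
      exact Finset.ne_of_mem_erase h1 h3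
    · refine det_aux L bΛ ρ hρ B hliB _ ?_
      intro j hj
      have hjA : j ∈ A.erase j₀ := by
        refine Finset.mem_erase.mpr ⟨fun h => hj (h ▸ hB0), ?_⟩
        have : j ∈ A ∪ B := huniv ▸ Finset.mem_univ j
        rcases Finset.mem_union.mp this with h | h
        · exact h
        · exact absurd h hj
      exact ⟨eA ⟨j, hjA⟩, by simp⟩
    · refine det_aux L bΛ ρ hρ A hliA _ ?_
      intro j hj
      have hjB : j ∈ B.erase j₀ := by
        refine Finset.mem_erase.mpr ⟨fun h => hj (h ▸ hA0), ?_⟩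
        have : j ∈ A ∪ B := huniv ▸ Finset.mem_univ j
        rcases Finset.mem_union.mp this with h | h
        · exact absurd h hj
        · exact h
      exact ⟨eB ⟨j, hjB⟩, by simp⟩
end
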